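/- For every ε > 0, the link of the Cartan umbrella at the origin, namely the set {(x,y,z) ∈ ℝ³ | x² = z·y² ∧ x² + y² + z² = ε²} with its subspace topology, is homeomorphic to the disjoint union of a figure eight and a point, realized as the subspace F ∪ {(5,0)} of ℝ², where F = {(a,b) ∈ ℝ² | (a−1)² + b² = 1 ∨ (a+1)² + b² = 1} is the union of two unit circles tangent at the origin. -/

import Mathlib

open Real

noncomputable def gmapA (ε : ℝ) (p : ℝ × ℝ × ℝ) : ℝ × ℝ :=
  (2 / ε * p.2.1 * Real.sqrt ((ε - p.2.2) * (1 + p.2.2) / (ε + |p.2.2|))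
     + 5 * max (-p.2.2) 0 / ε,
   2 / ε * p.1 * Real.sqrt ((1 + p.2.2) / (ε + |p.2.2|)))

lemma gmapA_continuous {ε : ℝ} (hε : 0 < ε) : Continuous (gmapA ε) := by
  unfold gmapA
  fun_prop (disch := intro p; positivity)

lemma struct_lemma {ε x y z : ℝ} (hε : 0 < ε) (h1 : x^2 = z*y^2)
    (h2 : x^2+y^2+z^2 = ε^2) :
    (x = 0 ∧ y = 0 ∧ z = -ε) ∨ (0 ≤ z ∧ z ≤ ε ∧ y^2*(1+z) = ε^2 - z^2) := by
  rcases le_or_gt 0 z with hz | hz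
  · right
    refine ⟨hz, by nlinarith [sq_nonneg x, sq_nonneg y], by nlinarith⟩
  · left
    have hx : x = 0 := by nlinarith [sq_nonneg x, sq_nonneg y, mul_nonneg (le_of_lt (neg_pos.mpr hz)) (sq_nonneg y)]
    have hy : y = 0 := by
      have : z * y^2 = 0 := by nlinarith
      rcases mul_eq_zero.mp this with h | h
      · exact absurd h (ne_of_lt hz)
      · exact pow_eq_zero_iff (by norm_num) |>.mp h
    have hzz : z = -ε := by nlinarith
    exact ⟨hx, hy, hzz⟩

-- facts about gmapA on the curve part
lemma curve_facts {ε x y z : ℝ} (hε : 0 < ε) (hz0 : 0 ≤ z) (hzε : z ≤ ε)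
    (hy : y^2*(1+z) = ε^2 - z^2) (hx : x^2 = z*y^2) :
    gmapA ε (x,y,z) = (2/ε * y * Real.sqrt ((ε - z) * (1 + z) / (ε + z)),
                       2/ε * x * Real.sqrt ((1 + z) / (ε + z))) ∧
    (2/ε * y * Real.sqrt ((ε - z) * (1 + z) / (ε + z)))^2 = 4*(ε-z)^2/ε^2 ∧
    (2/ε * x * Real.sqrt ((1 + z) / (ε + z)))^2 = 4*z*(ε-z)/ε^2 ∧
    0 < Real.sqrt ((1 + z) / (ε + z)) ∧
    (z < ε → 0 < Real.sqrt ((ε - z) * (1 + z) / (ε + z))) := by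
  have hεz : (0:ℝ) < ε + z := by linarith
  have h1z : (0:ℝ) < 1 + z := by linarith
  have habs : |z| = z := abs_of_nonneg hz0
  have hmax : max (-z) 0 = 0 := max_eq_right (by linarith)
  constructor
  · simp only [gmapA, habs, hmax]
    norm_num
  refine ⟨?_, ?_, ?_, ?_⟩
  · have hW : (0:ℝ) ≤ (ε - z) * (1 + z) / (ε + z) :=
      div_nonneg (mul_nonneg (by linarith) (by linarith)) (by linarith)
    have hsq : Real.sqrt ((ε - z) * (1 + z) / (ε + z)) ^ 2 = (ε - z) * (1 + z) / (ε + z) :=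
      Real.sq_sqrt hW
    have : (2/ε * y * Real.sqrt ((ε - z) * (1 + z) / (ε + z)))^2
        = 4/ε^2 * (y^2 * ((ε - z) * (1 + z) / (ε + z))) := by
      rw [mul_pow, mul_pow, hsq]; ring
    rw [this]
    field_simp
    linear_combination (ε-z)*hy
  · have hV : (0:ℝ) ≤ (1 + z) / (ε + z) := le_of_lt (div_pos h1z hεz)
    have hsq : Real.sqrt ((1 + z) / (ε + z)) ^ 2 = (1 + z) / (ε + z) := Real.sq_sqrt hV
    have : (2/ε * x * Real.sqrt ((1 + z) / (ε + z)))^2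
        = 4/ε^2 * (x^2 * ((1 + z) / (ε + z))) := by
      rw [mul_pow, mul_pow, hsq]; ring
    rw [this, hx]
    field_simp
    linear_combination z*hy
  · exact Real.sqrt_pos.mpr (div_pos h1z hεz)
  · intro h
    exact Real.sqrt_pos.mpr (div_pos (mul_pos (by linarith) h1z) hεz)

lemma gmapA_iso {ε : ℝ} (hε : 0 < ε) : gmapA ε ((0:ℝ),(0:ℝ),-ε) = ((5:ℝ),(0:ℝ)) := by
  have h1 : max (-(-ε)) (0:ℝ) = ε := by rw [neg_neg]; exact max_eq_left hε.le
  simp only [gmapA, h1]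
  have : 5 * ε / ε = 5 := by field_simp
  norm_num [this]

lemma surj_circle {ε σ a b : ℝ} (hε : 0 < ε) (hσ : σ^2 = 1)
    (hq : (a - σ)^2 + b^2 = 1) :
    ∃ x y z : ℝ, x^2 = z*y^2 ∧ x^2+y^2+z^2 = ε^2 ∧ gmapA ε (x,y,z) = (a,b) := by
  have hσa0 : 0 ≤ σ*a := by nlinarith [sq_nonneg b, sq_nonneg a]
  have hσa2 : σ*a ≤ 2 := by nlinarith [sq_nonneg b, sq_nonneg a]
  have hb2 : b^2 = 2*(σ*a) - a^2 := by linear_combination hq - hσ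
  set z : ℝ := ε*(1 - σ*a/2) with hzdef
  have hz0 : 0 ≤ z := by rw [hzdef]; nlinarith
  have hzε : z ≤ ε := by rw [hzdef]; nlinarith
  have hεz : (0:ℝ) < ε + z := by linarith
  have h1z : (0:ℝ) < 1 + z := by linarith
  have harg1 : (0:ℝ) ≤ (ε^2 - z^2)/(1+z) :=
    div_nonneg (by nlinarith) h1z.le
  have harg3 : (0:ℝ) ≤ (ε+z)/(1+z) := div_nonneg hεz.le h1z.le
  set y : ℝ := σ * Real.sqrt ((ε^2 - z^2)/(1+z)) with hydef
  set x : ℝ := ε*b/2 * Real.sqrt ((ε+z)/(1+z)) with hxdef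
  have hy2 : y^2 = (ε^2 - z^2)/(1+z) := by
    rw [hydef, mul_pow, hσ, Real.sq_sqrt harg1, one_mul]
  have hx2 : x^2 = (ε*b/2)^2 * ((ε+z)/(1+z)) := by
    rw [hxdef, mul_pow, Real.sq_sqrt harg3]
  have hyz : y^2*(1+z) = ε^2 - z^2 := by
    rw [hy2]; field_simp
  have hzz : z*(ε - z) = ε^2*b^2/4 := by
    rw [hzdef, hb2]; linear_combination (-(ε^2*a^2)/4)*hσ
  have key1 : x^2 = z * y^2 := by
    rw [hx2, hy2]
    field_simp
    linear_combination (-4*(ε+z))*hzz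
  have key2 : x^2+y^2+z^2 = ε^2 := by linear_combination key1 + hyz
  obtain ⟨hgm, -, -, -, -⟩ := curve_facts hε hz0 hzε hyz key1
  refine ⟨x, y, z, key1, key2, ?_⟩
  rw [hgm]
  have hεza : ε - z = ε*(σ*a)/2 := by rw [hzdef]; ring
  have hprod1 : Real.sqrt ((ε^2 - z^2)/(1+z)) * Real.sqrt ((ε-z)*(1+z)/(ε+z)) = ε - z := by
    rw [← Real.sqrt_mul harg1]
    have : (ε^2 - z^2)/(1+z) * ((ε-z)*(1+z)/(ε+z)) = (ε-z)^2 := by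
      field_simp; ring
    rw [this, Real.sqrt_sq (by linarith)]
  have hprod2 : Real.sqrt ((ε+z)/(1+z)) * Real.sqrt ((1+z)/(ε+z)) = 1 := by
    rw [← Real.sqrt_mul harg3]
    have : (ε+z)/(1+z) * ((1+z)/(ε+z)) = 1 := by field_simp
    rw [this, Real.sqrt_one]
  have c1 : 2/ε * y * Real.sqrt ((ε-z)*(1+z)/(ε+z)) = a := by
    rw [hydef]
    have : 2/ε * (σ * Real.sqrt ((ε^2 - z^2)/(1+z))) * Real.sqrt ((ε-z)*(1+z)/(ε+z))
        = 2*σ/ε * (Real.sqrt ((ε^2 - z^2)/(1+z)) * Real.sqrt ((ε-z)*(1+z)/(ε+z))) := by ring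
    rw [this, hprod1, hεza]
    calc 2*σ/ε*(ε*(σ*a)/2) = σ^2*a*(ε/ε) := by ring
      _ = a := by rw [hσ, div_self hε.ne']; ring
  have c2 : 2/ε * x * Real.sqrt ((1+z)/(ε+z)) = b := by
    rw [hxdef]
    have : 2/ε * (ε*b/2 * Real.sqrt ((ε+z)/(1+z))) * Real.sqrt ((1+z)/(ε+z))
        = b * (ε/ε) * (Real.sqrt ((ε+z)/(1+z)) * Real.sqrt ((1+z)/(ε+z))) := by ring
    rw [this, hprod2, div_self hε.ne']
    ring
  rw [c1, c2]

set_option maxHeartbeats 1000000 in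
/-- For every `ε > 0`, the link of the Cartan umbrella at the origin is
homeomorphic to the disjoint union of a figure eight and a point, realized
as `F ∪ {(5,0)} ⊆ ℝ²` where `F` is two unit circles tangent at the origin. -/
theorem stmt_6 (ε : ℝ) (hε : 0 < ε) :
    Nonempty
      (({p : ℝ × ℝ × ℝ | p.1 ^ 2 = p.2.2 * p.2.1 ^ 2 ∧
          p.1 ^ 2 + p.2.1 ^ 2 + p.2.2 ^ 2 = ε ^ 2} : Set (ℝ × ℝ × ℝ)) ≃ₜ
        (({q : ℝ × ℝ | (q.1 - 1) ^ 2 + q.2 ^ 2 = 1 ∨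
          (q.1 + 1) ^ 2 + q.2 ^ 2 = 1} ∪ {((5 : ℝ), (0 : ℝ))}) : Set (ℝ × ℝ))) := by
  set S : Set (ℝ × ℝ × ℝ) := {p : ℝ × ℝ × ℝ | p.1 ^ 2 = p.2.2 * p.2.1 ^ 2 ∧
          p.1 ^ 2 + p.2.1 ^ 2 + p.2.2 ^ 2 = ε ^ 2} with hS
  set T : Set (ℝ × ℝ) := {q : ℝ × ℝ | (q.1 - 1) ^ 2 + q.2 ^ 2 = 1 ∨
          (q.1 + 1) ^ 2 + q.2 ^ 2 = 1} ∪ {((5 : ℝ), (0 : ℝ))} with hT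
  -- the map sends S into T
  have hmaps : ∀ p : ℝ × ℝ × ℝ, p ∈ S → gmapA ε p ∈ T := by
    rintro ⟨x, y, z⟩ ⟨h1, h2⟩
    have h1' : x^2 = z*y^2 := h1
    have h2' : x^2+y^2+z^2 = ε^2 := h2
    rcases struct_lemma hε h1' h2' with ⟨hx, hy, hz⟩ | ⟨hz0, hzε, hy⟩
    · subst hx; subst hy; subst hz
      rw [gmapA_iso hε]
      exact Or.inr rfl
    · obtain ⟨hgm, ha2, hb2, hsB, hsA⟩ := curve_facts hε hz0 hzε hy h1'
      rw [hgm]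
      left
      set A := 2/ε * y * Real.sqrt ((ε - z) * (1 + z) / (ε + z)) with hA
      set B := 2/ε * x * Real.sqrt ((1 + z) / (ε + z)) with hB
      have e1 : (A^2 + B^2)^2 - 4*A^2 = 0 := by
        rw [ha2, hb2]
        field_simp
        ring
      have key : ((A-1)^2 + B^2 - 1) * ((A+1)^2 + B^2 - 1) = 0 := by
        linear_combination e1
      rcases mul_eq_zero.mp key with h | h
      · exact Or.inl (by linarith)
      · exact Or.inr (by linarith)
  -- injectivity
  have hinj : ∀ p ∈ S, ∀ q ∈ S, gmapA ε p = gmapA ε q → p = q := by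
    rintro ⟨x, y, z⟩ ⟨h1, h2⟩ ⟨x', y', z'⟩ ⟨h1', h2'⟩ heq
    have g1 : x^2 = z*y^2 := h1
    have g2 : x^2+y^2+z^2 = ε^2 := h2
    have g1' : x'^2 = z'*y'^2 := h1'
    have g2' : x'^2+y'^2+z'^2 = ε^2 := h2'
    rcases struct_lemma hε g1 g2 with ⟨hx, hy, hz⟩ | ⟨hz0, hzε, hy⟩ <;>
      rcases struct_lemma hε g1' g2' with ⟨hx', hy', hz'⟩ | ⟨hz0', hzε', hy'⟩
    · subst hx; subst hy; subst hz; subst hx'; subst hy'; subst hz'; rfl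
    · -- first isolated, second curve : contradiction
      exfalso
      subst hx; subst hy; subst hz
      obtain ⟨hgm', ha2', hb2', hsB', hsA'⟩ := curve_facts hε hz0' hzε' hy' g1'
      rw [gmapA_iso hε, hgm'] at heq
      have h5 : (5:ℝ) = 2/ε * y' * Real.sqrt ((ε - z') * (1 + z') / (ε + z')) :=
        congrArg Prod.fst heq
      rw [← h5] at ha2'
      have hle : (ε - z')^2 ≤ ε^2 := by nlinarith
      field_simp at ha2'
      nlinarith [hle, mul_pos hε hε]
    · -- first curve, second isolated : contradiction
      exfalso
      subst hx'; subst hy'; subst hz'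
      obtain ⟨hgm, ha2, hb2, hsB, hsA⟩ := curve_facts hε hz0 hzε hy g1
      rw [gmapA_iso hε, hgm] at heq
      have h5 : 2/ε * y * Real.sqrt ((ε - z) * (1 + z) / (ε + z)) = (5:ℝ) :=
        congrArg Prod.fst heq
      rw [h5] at ha2
      have hle : (ε - z)^2 ≤ ε^2 := by nlinarith
      field_simp at ha2
      nlinarith [hle, mul_pos hε hε]
    · -- both curve points
      obtain ⟨hgm, ha2, hb2, hsB, hsA⟩ := curve_facts hε hz0 hzε hy g1
      obtain ⟨hgm', ha2', hb2', hsB', hsA'⟩ := curve_facts hε hz0' hzε' hy' g1'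
      rw [hgm, hgm'] at heq
      rw [Prod.mk.injEq] at heq
      obtain ⟨hab, hbb⟩ := heq
      -- z = z'
      have hzsum : 4*(ε-z)/ε = 4*(ε-z')/ε := by
        have e1 : 4*(ε-z)^2/ε^2 + 4*z*(ε-z)/ε^2 = 4*(ε-z)/ε := by
          field_simp; ring
        have e2 : 4*(ε-z')^2/ε^2 + 4*z'*(ε-z')/ε^2 = 4*(ε-z')/ε := by
          field_simp; ring
        rw [← e1, ← e2, ← ha2, ← hb2, ← ha2', ← hb2', hab, hbb]
      have hzz : z = z' := by
        field_simp at hzsum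
        linarith
      subst hzz
      -- x = x'
      have hxx : x = x' := by
        have hne : (2/ε * Real.sqrt ((1 + z) / (ε + z))) ≠ 0 :=
          ne_of_gt (mul_pos (by positivity) hsB)
        apply mul_right_cancel₀ hne
        linear_combination hbb
      -- y = y'
      have hyy : y = y' := by
        rcases eq_or_lt_of_le hzε with hze | hzlt
        · have hy0 : y = 0 := by
            have : y^2 = 0 := by nlinarith [hy]
            exact pow_eq_zero_iff (by norm_num) |>.mp this
          have hy0' : y' = 0 := by
            have : y'^2 = 0 := by nlinarith [hy']
            exact pow_eq_zero_iff (by norm_num) |>.mp this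
          rw [hy0, hy0']
        · have hne : (2/ε * Real.sqrt ((ε - z) * (1 + z) / (ε + z))) ≠ 0 :=
            ne_of_gt (mul_pos (by positivity) (hsA hzlt))
          apply mul_right_cancel₀ hne
          linear_combination hab
      rw [hxx, hyy]
  -- surjectivity
  have hsurj : ∀ q ∈ T, ∃ p ∈ S, gmapA ε p = q := by
    rintro ⟨a, b⟩ hq
    rcases hq with (hq | hq) | hq
    · obtain ⟨x, y, z, k1, k2, k3⟩ := surj_circle hε (by norm_num : (1:ℝ)^2 = 1)
        (by linear_combination hq : (a - 1)^2 + b^2 = 1)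
      exact ⟨(x, y, z), ⟨k1, k2⟩, k3⟩
    · obtain ⟨x, y, z, k1, k2, k3⟩ := surj_circle hε (by norm_num : ((-1:ℝ))^2 = 1)
        (by linear_combination hq : (a - (-1))^2 + b^2 = 1)
      exact ⟨(x, y, z), ⟨k1, k2⟩, k3⟩
    · refine ⟨((0:ℝ), (0:ℝ), -ε), ⟨by norm_num, by norm_num⟩, ?_⟩
      rw [gmapA_iso hε]
      exact hq.symm
  -- compactness of S
  have hclosed : IsClosed S := by
    rw [hS, Set.setOf_and]
    exact (isClosed_eq (by fun_prop) (by fun_prop)).inter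
      (isClosed_eq (by fun_prop) (by fun_prop))
  have hbdd : Bornology.IsBounded S := by
    apply Bornology.IsBounded.subset (Metric.isBounded_closedBall (x := (0:ℝ×ℝ×ℝ)) (r := ε))
    rintro ⟨x, y, z⟩ ⟨h1, h2⟩
    have g1 : x^2 = z*y^2 := h1
    have g2 : x^2+y^2+z^2 = ε^2 := h2
    rw [Metric.mem_closedBall, dist_zero_right, Prod.norm_def, Prod.norm_def]
    have hx2 : x^2 ≤ ε^2 := by nlinarith [sq_nonneg y, sq_nonneg z]
    have hy2 : y^2 ≤ ε^2 := by nlinarith [sq_nonneg x, sq_nonneg z]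
    have hz2 : z^2 ≤ ε^2 := by nlinarith [sq_nonneg x, sq_nonneg y]
    simp only [Real.norm_eq_abs]
    refine max_le (abs_le.mpr ⟨?_, ?_⟩) (max_le (abs_le.mpr ⟨?_, ?_⟩) (abs_le.mpr ⟨?_, ?_⟩)) <;>
      nlinarith [sq_nonneg (x+ε), sq_nonneg (x-ε), sq_nonneg (y+ε), sq_nonneg (y-ε),
        sq_nonneg (z+ε), sq_nonneg (z-ε)]
  have hcpt : IsCompact S := Metric.isCompact_of_isClosed_isBounded hclosed hbdd
  have : CompactSpace S := isCompact_iff_compactSpace.mp hcpt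
  -- assemble the homeomorphism
  let f : S → T := fun p => ⟨gmapA ε p.1, hmaps p.1 p.2⟩
  have hfc : Continuous f :=
    Continuous.subtype_mk ((gmapA_continuous hε).comp continuous_subtype_val) _
  have hfinj : Function.Injective f := fun p q h =>
    Subtype.ext (hinj p.1 p.2 q.1 q.2 (Subtype.ext_iff.mp h))
  have hfsurj : Function.Surjective f := fun q => by
    obtain ⟨p, hp, hgp⟩ := hsurj q.1 q.2
    exact ⟨⟨p, hp⟩, Subtype.ext hgp⟩
  exact ⟨Continuous.homeoOfEquivCompactToT2 (f := Equiv.ofBijective f ⟨hfinj, hfsurj⟩) hfc⟩
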